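/- In the algebra R = K⟨x,y⟩/(xy−1) over a field K, the set {y^i x^j : i,j ≥ 0} forms a K-basis of R. -/

import Mathlib

noncomputable section

/-- The defining relation of the Toeplitz/Jacobson algebra: `x * y = 1`. -/
inductive ToeplitzRel (K : Type*) [Field K] :
    FreeAlgebra K (Fin 2) → FreeAlgebra K (Fin 2) → Prop
  | rel : ToeplitzRel K (FreeAlgebra.ι K 0 * FreeAlgebra.ι K 1) 1

/-- The Toeplitz/Jacobson algebra `R = K⟨x,y⟩/(xy-1)`. -/
abbrev Toeplitz (K : Type*) [Field K] := RingQuot (ToeplitzRel K)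

variable (K : Type*) [Field K]

/-- The image of the generator `x` in `R`. -/
def tx : Toeplitz K := RingQuot.mkAlgHom K (ToeplitzRel K) (FreeAlgebra.ι K 0)

/-- The image of the generator `y` in `R`. -/
def ty : Toeplitz K := RingQuot.mkAlgHom K (ToeplitzRel K) (FreeAlgebra.ι K 1)

/-- `f n = y^(n-1) x^(n-1) - y^n x^n`. -/
def tf (n : ℕ) : Toeplitz K := ty K ^ (n-1) * tx K ^ (n-1) - ty K ^ n * tx K ^ n

/-- The bicyclic monoid -/
structure Bi where
  i : ℕ
  j : ℕ

instance : Mul Bi := ⟨fun a b => ⟨a.i + (b.i - a.j), b.j + (a.j - b.i)⟩⟩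
instance : One Bi := ⟨⟨0, 0⟩⟩

lemma Bi.mul_def (a b : Bi) : a * b = ⟨a.i + (b.i - a.j), b.j + (a.j - b.i)⟩ := rfl
lemma Bi.one_def : (1 : Bi) = ⟨0, 0⟩ := rfl

instance : Monoid Bi where
  mul_assoc a b c := by
    simp only [Bi.mul_def, Bi.mk.injEq]
    constructor <;> omega
  one_mul a := by simp [Bi.mul_def, Bi.one_def]
  mul_one a := by simp [Bi.mul_def, Bi.one_def]

lemma Bi.pow_y (n : ℕ) : (⟨1, 0⟩ : Bi) ^ n = ⟨n, 0⟩ := by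
  induction n with
  | zero => rfl
  | succ n ih => rw [pow_succ, ih, Bi.mul_def]; simp

lemma Bi.pow_x (n : ℕ) : (⟨0, 1⟩ : Bi) ^ n = ⟨0, n⟩ := by
  induction n with
  | zero => rfl
  | succ n ih => rw [pow_succ, ih, Bi.mul_def]; simp [Nat.add_comm]

lemma txy : tx K * ty K = 1 := by
  have := RingQuot.mkAlgHom_rel K (ToeplitzRel.rel (K := K))
  simpa only [map_mul, map_one, tx, ty] using this

lemma key (k j : ℕ) : tx K ^ j * ty K ^ k = ty K ^ (k - j) * tx K ^ (j - k) := by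
  induction k generalizing j with
  | zero => simp
  | succ k ih =>
    rw [pow_succ, ← mul_assoc, ih]
    rcases le_or_gt j k with h | h
    · have h1 : j - k = 0 := by omega
      have h2 : j - (k + 1) = 0 := by omega
      have h3 : k + 1 - j = (k - j) + 1 := by omega
      rw [h1, h2, h3]
      simp [pow_succ]
    · have h1 : k - j = 0 := by omega
      have h2 : k + 1 - j = 0 := by omega
      have h3 : j - k = (j - (k + 1)) + 1 := by omega
      rw [h1, h2, h3]
      simp only [pow_zero, one_mul, pow_succ]
      rw [mul_assoc, txy, mul_one]

lemma mul_mono (i j k l : ℕ) :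
    (ty K ^ i * tx K ^ j) * (ty K ^ k * tx K ^ l)
      = ty K ^ (i + (k - j)) * tx K ^ (l + (j - k)) := by
  calc (ty K ^ i * tx K ^ j) * (ty K ^ k * tx K ^ l)
      = ty K ^ i * ((tx K ^ j * ty K ^ k) * tx K ^ l) := by
        simp only [mul_assoc]
    _ = ty K ^ i * ((ty K ^ (k - j) * tx K ^ (j - k)) * tx K ^ l) := by rw [key]
    _ = (ty K ^ i * ty K ^ (k - j)) * (tx K ^ (j - k) * tx K ^ l) := by
        simp only [mul_assoc]
    _ = ty K ^ (i + (k - j)) * tx K ^ ((j - k) + l) := by rw [← pow_add, ← pow_add]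
    _ = ty K ^ (i + (k - j)) * tx K ^ (l + (j - k)) := by rw [Nat.add_comm (j - k) l]

/-- The monoid hom from the bicyclic monoid to the Toeplitz algebra. -/
def biHom : Bi →* Toeplitz K where
  toFun a := ty K ^ a.i * tx K ^ a.j
  map_one' := by simp [Bi.one_def]
  map_mul' a b := by
    simp only [Bi.mul_def]
    exact (mul_mono K a.i a.j b.i b.j).symm

/-- The alg hom from the monoid algebra to the Toeplitz algebra. -/
def psi : MonoidAlgebra K Bi →ₐ[K] Toeplitz K :=
  MonoidAlgebra.lift K (Toeplitz K) Bi (biHom K)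

lemma psi_single (a : Bi) :
    psi K (MonoidAlgebra.single a 1) = ty K ^ a.i * tx K ^ a.j := by
  simp [psi, MonoidAlgebra.lift_single, biHom]

def freeHom : FreeAlgebra K (Fin 2) →ₐ[K] MonoidAlgebra K Bi :=
  FreeAlgebra.lift K ![MonoidAlgebra.of K Bi ⟨0, 1⟩, MonoidAlgebra.of K Bi ⟨1, 0⟩]

/-- The alg hom from the Toeplitz algebra to the monoid algebra. -/
def phi : Toeplitz K →ₐ[K] MonoidAlgebra K Bi :=
  RingQuot.liftAlgHom K ⟨freeHom K, by
    intro r s h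
    cases h
    simp only [map_one, freeHom]
    rw [map_mul, FreeAlgebra.lift_ι_apply, FreeAlgebra.lift_ι_apply,
      Matrix.cons_val_zero, Matrix.cons_val_one, Matrix.cons_val_zero, ← map_mul,
      show (⟨0, 1⟩ * ⟨1, 0⟩ : Bi) = 1 from rfl, map_one]⟩

lemma phi_tx : phi K (tx K) = MonoidAlgebra.of K Bi ⟨0, 1⟩ := by
  simp [phi, tx, RingQuot.liftAlgHom_mkAlgHom_apply, freeHom]

lemma phi_ty : phi K (ty K) = MonoidAlgebra.of K Bi ⟨1, 0⟩ := by
  simp [phi, ty, RingQuot.liftAlgHom_mkAlgHom_apply, freeHom]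

lemma psi_phi_tx : psi K (phi K (tx K)) = tx K := by
  rw [phi_tx, MonoidAlgebra.of_apply, psi_single]; simp

lemma psi_phi_ty : psi K (phi K (ty K)) = ty K := by
  rw [phi_ty, MonoidAlgebra.of_apply, psi_single]; simp

/-- The algebra isomorphism. -/
def toepEquiv : MonoidAlgebra K Bi ≃ₐ[K] Toeplitz K := by
  refine AlgEquiv.ofAlgHom (psi K) (phi K) ?_ ?_
  · ext i
    fin_cases i
    · show psi K (phi K (tx K)) = tx K
      exact psi_phi_tx K
    · show psi K (phi K (ty K)) = ty K
      exact psi_phi_ty K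
  · refine MonoidAlgebra.algHom_ext ?_ (Subsingleton.elim _ _)
    intro a
    simp only [AlgHom.coe_comp, Function.comp_apply, AlgHom.coe_id, id_eq, psi_single, map_mul,
      map_pow, phi_tx, phi_ty]
    rw [← map_pow, ← map_pow, ← map_mul, Bi.pow_y, Bi.pow_x]
    have : (⟨a.i, 0⟩ * ⟨0, a.j⟩ : Bi) = a := by simp [Bi.mul_def]
    rw [this, MonoidAlgebra.of_apply]

/-- The set `{y^i x^j : i, j ≥ 0}` is a `K`-basis of `R = K⟨x,y⟩/(xy-1)`. -/
theorem toeplitz_basis :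
    ∃ b : Module.Basis (ℕ × ℕ) K (Toeplitz K), ∀ p : ℕ × ℕ, b p = ty K ^ p.1 * tx K ^ p.2 := by
  let bB : Module.Basis Bi K (MonoidAlgebra K Bi) := MonoidAlgebra.basis Bi K
  let e : Bi ≃ ℕ × ℕ := ⟨fun a => (a.i, a.j), fun p => ⟨p.1, p.2⟩, fun a => rfl, fun p => rfl⟩
  refine ⟨((bB.map (toepEquiv K).toLinearEquiv).reindex e), fun p => ?_⟩
  simp only [Module.Basis.reindex_apply, Module.Basis.map_apply]
  have : bB (e.symm p) = MonoidAlgebra.single ⟨p.1, p.2⟩ 1 := by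
    rfl
  rw [this]
  show psi K _ = _
  rw [psi_single]
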